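/- Failure of strong Rayleigh for ⌊2X/3⌋: Let n ≥ 2, let X ~ Bin(3n, 1/2), and let z_1, ..., z_d be the complex roots of the probability generating function of ⌊2X/3⌋. Then max_i Im(z_i) ≥ sqrt((9n² − 9n − 1)/2), where Im(z) denotes the imaginary part of z. -/

import Mathlib

open scoped BigOperators

/-- The binomial probability mass function `Bin(m, p)`. -/
noncomputable def binPMF (m : ℕ) (p : ℝ) (k : ℕ) : ℝ :=
  (m.choose k : ℝ) * p ^ k * (1 - p) ^ (m - k)

/-- The pmf of `⌊2X/3⌋` for `X ~ Bin(3n, 1/2)`: the value `j` receives the total mass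
of all `i` with `⌊2i/3⌋ = j`. -/
noncomputable def floorTwoThirdsPMF (n : ℕ) (j : ℕ) : ℝ :=
  ∑ i ∈ (Finset.range (3 * n + 1)).filter fun i => 2 * i / 3 = j,
    binPMF (3 * n) (1 / 2) i

/- ### Auxiliary lemmas -/

lemma aux_esymm_one (s : Multiset ℂ) : s.esymm 1 = s.sum := by
  simp [Multiset.esymm, Multiset.powersetCard_one, Multiset.map_map, Function.comp]

lemma aux_esymm_two_cons (a : ℂ) (s : Multiset ℂ) :
    (a ::ₘ s).esymm 2 = a * s.sum + s.esymm 2 := by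
  rw [Multiset.esymm, Multiset.powersetCard_cons, Multiset.map_add, Multiset.sum_add,
    Multiset.map_map]
  rw [Multiset.esymm]
  ring_nf
  congr 1
  rw [Multiset.powersetCard_one, Multiset.map_map]
  simpa using Multiset.sum_map_mul_left (s := s) (a := a) (f := id)

lemma aux_sq_sum (s : Multiset ℂ) :
    s.sum ^ 2 = (s.map (· ^ 2)).sum + 2 * s.esymm 2 := by
  induction s using Multiset.induction with
  | empty => simp [Multiset.esymm, Multiset.powersetCard_zero_right]
  | cons a s ih =>
    rw [Multiset.sum_cons, Multiset.map_cons, Multiset.sum_cons, aux_esymm_two_cons]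
    ring_nf
    rw [ih]
    ring

lemma aux_sum_lt_card_mul (s : Multiset ℝ) (t : ℝ) (h0 : s ≠ 0) (h : ∀ x ∈ s, x < t) :
    s.sum < s.card * t := by
  induction s using Multiset.induction with
  | empty => simp at h0
  | cons a s ih =>
    rcases eq_or_ne s 0 with rfl | hs
    · simpa using h a (by simp)
    · have := ih hs (fun x hx => h x (Multiset.mem_cons_of_mem hx))
      have ha := h a (Multiset.mem_cons_self a s)
      simp only [Multiset.sum_cons, Multiset.card_cons]
      push_cast
      nlinarith

lemma aux_re_sum_sq (s : Multiset ℂ) :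
    ((s.map (fun z => z ^ 2)).sum).re
      = (s.map (fun z => z.re ^ 2)).sum - (s.map (fun z => z.im ^ 2)).sum := by
  induction s using Multiset.induction with
  | empty => simp
  | cons a s ih =>
    rw [Multiset.map_cons, Multiset.sum_cons, Complex.add_re, ih,
      Multiset.map_cons, Multiset.sum_cons, Multiset.map_cons, Multiset.sum_cons,
      show (a ^ 2).re = a.re ^ 2 - a.im ^ 2 by rw [pow_two, Complex.mul_re]; ring]
    ring

lemma aux_sum_sq_nonneg (s : Multiset ℂ) : 0 ≤ (s.map (fun z => z.re ^ 2)).sum := by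
  induction s using Multiset.induction with
  | empty => simp
  | cons a s ih =>
    simp only [Multiset.map_cons, Multiset.sum_cons]
    positivity

lemma aux_two_mul_choose_two (m : ℕ) : 2 * m.choose 2 = m * (m - 1) := by
  induction m with
  | zero => simp
  | succ k ih =>
    rw [Nat.choose_succ_succ, Nat.mul_add, ih, Nat.choose_one_right]
    cases k with
    | zero => simp
    | succ j => simp only [Nat.add_sub_cancel]; ring

lemma aux_six_mul_choose_three (m : ℕ) : 6 * m.choose 3 = m * (m - 1) * (m - 2) := by
  induction m with
  | zero => simp
  | succ k ih =>
    rw [Nat.choose_succ_succ, Nat.mul_add, ih,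
      show (6 : ℕ) = 3 * 2 by rfl, Nat.mul_assoc, aux_two_mul_choose_two]
    match k with
    | 0 => simp
    | 1 => simp
    | (j+2) => simp only [show j+2-1 = j+1 by omega, show j+2-2 = j by omega,
        show j+2+1-1 = j+2 by omega, show j+2+1-2 = j+1 by omega]; ring

lemma aux_key_nat (n : ℕ) :
    6 * ((3 * n).choose 2 + (3 * n).choose 3) + 3 * n = 27 * n ^ 3 := by
  rw [Nat.mul_add, show (6:ℕ) = 3*2 by rfl, Nat.mul_assoc, aux_two_mul_choose_two,
    aux_six_mul_choose_three]
  cases n with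
  | zero => simp
  | succ j =>
    simp only [show 3*(j+1)-1 = 3*j+2 by omega, show 3*(j+1)-2 = 3*j+1 by omega]
    ring

lemma aux_binPMF_half (m i : ℕ) (h : i ≤ m) :
    binPMF m (1 / 2) i = (m.choose i : ℝ) * (1 / 2) ^ m := by
  rw [binPMF, show (1 - 1/2 : ℝ) = 1/2 by norm_num, mul_assoc, ← pow_add]
  congr 2
  omega

lemma aux_pmf_top (n : ℕ) (hn : 2 ≤ n) :
    floorTwoThirdsPMF n (2 * n) = (1/2 : ℝ) ^ (3 * n) := by
  rw [floorTwoThirdsPMF]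
  have : (Finset.range (3 * n + 1)).filter (fun i => 2 * i / 3 = 2 * n) = {3 * n} := by
    ext i
    simp only [Finset.mem_filter, Finset.mem_range, Finset.mem_singleton]
    omega
  rw [this, Finset.sum_singleton, aux_binPMF_half _ _ le_rfl, Nat.choose_self]
  norm_num

lemma aux_pmf_second (n : ℕ) (hn : 2 ≤ n) :
    floorTwoThirdsPMF n (2 * n - 1) = (3 * n : ℝ) * (1/2 : ℝ) ^ (3 * n) := by
  rw [floorTwoThirdsPMF]
  have : (Finset.range (3 * n + 1)).filter (fun i => 2 * i / 3 = 2 * n - 1) = {3 * n - 1} := by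
    ext i
    simp only [Finset.mem_filter, Finset.mem_range, Finset.mem_singleton]
    omega
  rw [this, Finset.sum_singleton, aux_binPMF_half _ _ (by omega)]
  have : (3 * n).choose (3 * n - 1) = 3 * n := by
    rw [show 3 * n - 1 = 3 * n - (3*n - (3*n-1)) by omega, Nat.choose_symm (by omega)]
    simp [show 3*n - (3*n-1) = 1 by omega]
  rw [this]
  push_cast
  ring

lemma aux_pmf_third (n : ℕ) (hn : 2 ≤ n) :
    floorTwoThirdsPMF n (2 * n - 2)
      = (((3 * n).choose 2 + (3 * n).choose 3 : ℕ) : ℝ) * (1/2 : ℝ) ^ (3 * n) := by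
  rw [floorTwoThirdsPMF]
  have : (Finset.range (3 * n + 1)).filter (fun i => 2 * i / 3 = 2 * n - 2)
      = {3 * n - 3, 3 * n - 2} := by
    ext i
    simp only [Finset.mem_filter, Finset.mem_range, Finset.mem_insert, Finset.mem_singleton]
    omega
  rw [this, Finset.sum_insert (by simp; omega), Finset.sum_singleton,
    aux_binPMF_half _ _ (by omega), aux_binPMF_half _ _ (by omega)]
  have h1 : (3 * n).choose (3 * n - 3) = (3 * n).choose 3 := by
    rw [show 3 * n - 3 = 3 * n - (3*n - (3*n-3)) by omega, Nat.choose_symm (by omega)]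
    congr 1; omega
  have h2 : (3 * n).choose (3 * n - 2) = (3 * n).choose 2 := by
    rw [show 3 * n - 2 = 3 * n - (3*n - (3*n-2)) by omega, Nat.choose_symm (by omega)]
    congr 1; omega
  rw [h1, h2]
  push_cast
  ring

/-- Failure of strong Rayleigh for `⌊2X/3⌋`: if `n ≥ 2`, `X ~ Bin(3n, 1/2)` and
`z_1, ..., z_d` are the complex roots of the probability generating function of
`⌊2X/3⌋`, then `max_i Im(z_i) ≥ sqrt((9n² - 9n - 1)/2)`. -/
theorem floor_two_thirds_large_imaginary_root (n : ℕ) (hn : 2 ≤ n)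
    (P : Polynomial ℂ)
    (hP : P = ∑ j ∈ Finset.range (2 * n + 1),
      Polynomial.C ((floorTwoThirdsPMF n j : ℝ) : ℂ) * Polynomial.X ^ j) :
    ∃ z : ℂ, P.IsRoot z ∧
      Real.sqrt ((9 * (n : ℝ) ^ 2 - 9 * n - 1) / 2) ≤ z.im := by
  set B : ℕ := (3 * n).choose 2 + (3 * n).choose 3 with hB
  set qc : ℂ := ((1/2 : ℂ)) ^ (3 * n) with hqcdef
  have hqcast : (((1/2 : ℝ) ^ (3 * n) : ℝ) : ℂ) = qc := by push_cast; rw [hqcdef]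
  have hqc : qc ≠ 0 := pow_ne_zero _ (by norm_num)
  -- coefficients of P
  have hcoeff : ∀ k, k ≤ 2 * n → P.coeff k = ((floorTwoThirdsPMF n k : ℝ) : ℂ) := by
    intro k hk
    rw [hP, Polynomial.finset_sum_coeff]
    simp only [Polynomial.coeff_C_mul, Polynomial.coeff_X_pow]
    rw [Finset.sum_eq_single k]
    · simp
    · intro b _ hb
      rw [if_neg (fun h : k = b => hb h.symm), mul_zero]
    · intro h
      exact absurd (Finset.mem_range.mpr (by omega)) h
  have hc2n : P.coeff (2 * n) = qc := by
    rw [hcoeff _ le_rfl, aux_pmf_top n hn, hqcast]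
  have hc2n' : P.coeff (2 * n) ≠ 0 := by rw [hc2n]; exact hqc
  -- degree of P
  have hdle : P.natDegree ≤ 2 * n := by
    rw [hP]
    apply Polynomial.natDegree_sum_le_of_forall_le
    intro j hj
    exact (Polynomial.natDegree_C_mul_X_pow_le _ _).trans
      (by simpa using Nat.lt_succ_iff.mp (Finset.mem_range.mp hj))
  have hd : P.natDegree = 2 * n :=
    le_antisymm hdle (Polynomial.le_natDegree_of_ne_zero hc2n')
  have hP0 : P ≠ 0 := fun h => hc2n' (by simp [h])
  have hlc : P.leadingCoeff = qc := by rw [Polynomial.leadingCoeff, hd, hc2n]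
  have hcard : P.roots.card = P.natDegree :=
    Polynomial.splits_iff_card_roots.mp (IsAlgClosed.splits P)
  have hcard' : P.roots.card = 2 * n := by rw [hcard, hd]
  -- Vieta
  have v1 := Polynomial.coeff_eq_esymm_roots_of_card hcard (k := 2 * n - 1) (by omega)
  have v2 := Polynomial.coeff_eq_esymm_roots_of_card hcard (k := 2 * n - 2) (by omega)
  rw [hd, show 2*n - (2*n-1) = 1 by omega, hlc, aux_esymm_one,
    hcoeff _ (by omega), aux_pmf_second n hn] at v1
  rw [hd, show 2*n - (2*n-2) = 2 by omega, hlc,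
    hcoeff _ (by omega), aux_pmf_third n hn] at v2
  -- sum of roots and esymm 2
  have hS : P.roots.sum = -(3 * (n : ℂ)) := by
    apply mul_left_cancel₀ hqc
    push_cast [← hqcast] at v1
    push_cast
    linear_combination v1
  have hE2 : P.roots.esymm 2 = (B : ℂ) := by
    apply mul_left_cancel₀ hqc
    rw [hB]
    push_cast [← hqcast] at v2
    push_cast
    linear_combination -v2
  -- sum of squares of roots
  have hM2 : ((P.roots.map (· ^ 2)).sum)
      = ((9 * (n : ℝ) ^ 2 - 2 * (B : ℝ) : ℝ) : ℂ) := by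
    have h := aux_sq_sum P.roots
    rw [hS, hE2] at h
    push_cast
    linear_combination -h
  -- the imaginary-part bound
  have hre : (P.roots.map (fun z => z.re ^ 2)).sum - (P.roots.map (fun z => z.im ^ 2)).sum
      = 9 * (n : ℝ) ^ 2 - 2 * (B : ℝ) := by
    rw [← aux_re_sum_sq, hM2, Complex.ofReal_re]
  have hBval : 6 * (B : ℝ) + 3 * n = 27 * (n : ℝ) ^ 3 := by
    exact_mod_cast congrArg (Nat.cast : ℕ → ℝ) (aux_key_nat n)
  have him : 9 * (n : ℝ) ^ 3 - 9 * (n : ℝ) ^ 2 - n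
      ≤ (P.roots.map (fun z => z.im ^ 2)).sum := by
    have h0 := aux_sum_sq_nonneg P.roots
    linarith
  -- conclude
  set A : ℝ := (9 * (n : ℝ) ^ 2 - 9 * n - 1) / 2 with hA
  have hn' : (2 : ℝ) ≤ (n : ℝ) := by exact_mod_cast hn
  have hA0 : 0 ≤ A := by rw [hA]; nlinarith
  by_contra hcon
  push_neg at hcon
  have hconj : ∀ w : ℂ, P.IsRoot w → P.IsRoot ((starRingEnd ℂ) w) := by
    have hev : ∀ w : ℂ, P.eval w
        = ∑ j ∈ Finset.range (2*n+1), ((floorTwoThirdsPMF n j : ℝ) : ℂ) * w ^ j := by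
      intro w
      rw [hP]
      simp [Polynomial.eval_finset_sum]
    intro w hw
    have h2 : P.eval ((starRingEnd ℂ) w) = (starRingEnd ℂ) (P.eval w) := by
      rw [hev, hev, map_sum]
      exact Finset.sum_congr rfl fun j _ => by rw [map_mul, map_pow, Complex.conj_ofReal]
    unfold Polynomial.IsRoot at hw ⊢
    rw [h2, hw, map_zero]
  have hall : ∀ x ∈ P.roots.map (fun z => z.im ^ 2), x < A := by
    intro x hx
    obtain ⟨z, hz, rfl⟩ := Multiset.mem_map.mp hx
    have hr := Polynomial.isRoot_of_mem_roots hz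
    have h1 := hcon z hr
    have h2 := hcon _ (hconj z hr)
    rw [Complex.conj_im] at h2
    have habs : z.im ^ 2 < Real.sqrt A ^ 2 := sq_lt_sq' (by linarith) h1
    rwa [Real.sq_sqrt hA0] at habs
  have hne : P.roots.map (fun z => z.im ^ 2) ≠ 0 := by
    intro h
    have := congrArg Multiset.card h
    rw [Multiset.card_map, hcard'] at this
    simp at this
    omega
  have hlt := aux_sum_lt_card_mul _ A hne hall
  rw [Multiset.card_map, hcard'] at hlt
  have : ((2 * n : ℕ) : ℝ) * A = 9 * (n : ℝ) ^ 3 - 9 * (n : ℝ) ^ 2 - n := by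
    push_cast
    rw [hA]
    ring
  rw [this] at hlt
  linarith
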